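/- Let 0 ≤ h ≤ k ≤ n be integers. Suppose S ⊆ [1,n]×[1,n] has exactly k points in every row and every column (i.e., |S| = kn and every horizontal and vertical grid line contains exactly k points), and every non-horizontal, non-vertical line contains at most k − h points of S. Then for every k' with 0 ≤ k − k' ≤ h, there exists S' ⊆ [1,n]×[1,n] with exactly k' points in every row and column such that every non-horizontal, non-vertical line contains at most k' − (h − (k − k')) points of S'. -/

import Mathlib

open scoped Classical

/-- The integer grid `[1,n] × [1,n]`. -/
noncomputable def gridZ (n : ℕ) : Finset (ℤ × ℤ) := Finset.Icc (1, 1) ((n : ℤ), (n : ℤ))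

lemma mem_gridZ {n : ℕ} {p : ℤ × ℤ} (hp : p ∈ gridZ n) :
    p.1 ∈ Finset.Icc (1 : ℤ) (n : ℤ) ∧ p.2 ∈ Finset.Icc (1 : ℤ) (n : ℤ) := by
  simp only [gridZ, Finset.mem_Icc, Prod.le_def] at hp
  simp only [Finset.mem_Icc]
  exact ⟨⟨hp.1.1, hp.2.1⟩, ⟨hp.1.2, hp.2.2⟩⟩

/-- Remove one perfect matching from an (m+1)-regular set. -/
lemma step (n m : ℕ) (S : Finset (ℤ × ℤ)) (hsub : S ⊆ gridZ n)
    (hrow : ∀ y ∈ Finset.Icc (1 : ℤ) (n : ℤ), (S.filter (fun p => p.2 = y)).card = m + 1)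
    (hcol : ∀ x ∈ Finset.Icc (1 : ℤ) (n : ℤ), (S.filter (fun p => p.1 = x)).card = m + 1) :
    ∃ S' : Finset (ℤ × ℤ), S' ⊆ S ∧
      (∀ y ∈ Finset.Icc (1 : ℤ) (n : ℤ), (S'.filter (fun p => p.2 = y)).card = m) ∧
      (∀ x ∈ Finset.Icc (1 : ℤ) (n : ℤ), (S'.filter (fun p => p.1 = x)).card = m) := by
  set I : Finset ℤ := Finset.Icc (1 : ℤ) (n : ℤ) with hI
  set t : {y // y ∈ I} → Finset ℤ :=
    fun y => (S.filter (fun p => p.2 = y.1)).image Prod.fst with ht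
  have htsub : ∀ y, t y ⊆ I := by
    intro y x hx
    simp only [ht, Finset.mem_image, Finset.mem_filter] at hx
    obtain ⟨p, ⟨hpS, _⟩, rfl⟩ := hx
    exact (mem_gridZ (hsub hpS)).1
  have hmemt : ∀ (y : {y // y ∈ I}) (x : ℤ), x ∈ t y ↔ (x, y.1) ∈ S := by
    intro y x
    simp only [ht, Finset.mem_image, Finset.mem_filter]
    constructor
    · rintro ⟨p, ⟨hpS, hp2⟩, rfl⟩
      have : p = (p.1, y.1) := by rw [← hp2]
      rwa [← this]
    · intro h
      exact ⟨(x, y.1), ⟨h, rfl⟩, rfl⟩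
  -- Hall condition
  have hall : ∀ A : Finset {y // y ∈ I}, A.card ≤ (A.biUnion t).card := by
    intro A
    set E : Finset (ℤ × ℤ) := A.biUnion (fun y => S.filter (fun p => p.2 = y.1)) with hE
    have hEcard : E.card = (m + 1) * A.card := by
      rw [hE, Finset.card_biUnion]
      · rw [Finset.sum_congr rfl (fun y hy => hrow y.1 y.2)]
        simp [mul_comm]
      · intro a _ b _ hab
        simp only [Finset.disjoint_left, Finset.mem_filter]
        rintro p ⟨_, hp1⟩ ⟨_, hp2⟩
        exact hab (Subtype.ext (hp1 ▸ hp2))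
    have hEsub : E ⊆ (A.biUnion t).biUnion (fun x => S.filter (fun p => p.1 = x)) := by
      intro p hp
      simp only [hE, Finset.mem_biUnion, Finset.mem_filter] at hp ⊢
      obtain ⟨y, hy, hpS, hp2⟩ := hp
      refine ⟨p.1, ⟨y, hy, ?_⟩, hpS, rfl⟩
      rw [hmemt]
      have : p = (p.1, y.1) := by rw [← hp2]
      rwa [← this]
    have hle : E.card ≤ (m + 1) * (A.biUnion t).card := by
      calc E.card ≤ ((A.biUnion t).biUnion (fun x => S.filter (fun p => p.1 = x))).card :=
            Finset.card_le_card hEsub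
        _ ≤ ∑ x ∈ A.biUnion t, (S.filter (fun p => p.1 = x)).card :=
            Finset.card_biUnion_le
        _ ≤ ∑ _x ∈ A.biUnion t, (m + 1) := by
            refine Finset.sum_le_sum fun x hx => ?_
            have hxI : x ∈ I := by
              obtain ⟨y, _, hxy⟩ := Finset.mem_biUnion.1 hx
              exact htsub y hxy
            exact le_of_eq (hcol x hxI)
        _ = (m + 1) * (A.biUnion t).card := by simp [mul_comm]
    rw [hEcard] at hle
    exact Nat.le_of_mul_le_mul_left hle (Nat.succ_pos m)
  obtain ⟨f, hfinj, hft⟩ := (Finset.all_card_le_biUnion_card_iff_existsInjective' t).1 hall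
  -- the matching
  set M : Finset (ℤ × ℤ) := I.attach.image (fun y => (f y, y.1)) with hM
  have hMS : M ⊆ S := by
    intro p hp
    simp only [hM, Finset.mem_image] at hp
    obtain ⟨y, _, rfl⟩ := hp
    exact (hmemt y (f y)).1 (hft y)
  -- f is a bijection onto I
  have hfim : I.attach.image f = I := by
    apply Finset.eq_of_subset_of_card_le
    · intro x hx
      obtain ⟨y, _, rfl⟩ := Finset.mem_image.1 hx
      exact htsub y ((hmemt y (f y)).2 ((hmemt y (f y)).1 (hft y)))
    · rw [Finset.card_image_of_injective _ hfinj, Finset.card_attach]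
  -- M has exactly one point in each row
  have hMrow : ∀ y (hy : y ∈ I), M.filter (fun p => p.2 = y) = {(f ⟨y, hy⟩, y)} := by
    intro y hy
    ext p
    simp only [Finset.mem_filter, hM, Finset.mem_image, Finset.mem_singleton]
    constructor
    · rintro ⟨⟨z, _, rfl⟩, h2⟩
      simp only at h2
      subst h2
      rfl
    · rintro rfl
      exact ⟨⟨⟨y, hy⟩, Finset.mem_attach _ _, rfl⟩, rfl⟩
  -- M has exactly one point in each column
  have hMcol : ∀ x, x ∈ I → ∃ z : {y // y ∈ I},
      M.filter (fun p => p.1 = x) = {(x, z.1)} := by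
    intro x hx
    rw [← hfim] at hx
    obtain ⟨z, _, hz⟩ := Finset.mem_image.1 hx
    refine ⟨z, ?_⟩
    ext p
    simp only [Finset.mem_filter, hM, Finset.mem_image, Finset.mem_singleton]
    constructor
    · rintro ⟨⟨w, _, rfl⟩, h2⟩
      simp only at h2
      have : w = z := hfinj (h2.trans hz.symm)
      subst this
      rw [h2]
    · rintro rfl
      exact ⟨⟨z, Finset.mem_attach _ _, by rw [hz]⟩, rfl⟩
  refine ⟨S \ M, Finset.sdiff_subset, ?_, ?_⟩
  · intro y hy
    have hsd : (S \ M).filter (fun p => p.2 = y)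
        = S.filter (fun p => p.2 = y) \ M.filter (fun p => p.2 = y) := by
      ext p; simp only [Finset.mem_filter, Finset.mem_sdiff]; tauto
    rw [hsd, Finset.card_sdiff_of_subset (Finset.filter_subset_filter _ hMS), hrow y hy, hMrow y hy]
    simp
  · intro x hx
    obtain ⟨z, hz⟩ := hMcol x hx
    have hsd : (S \ M).filter (fun p => p.1 = x)
        = S.filter (fun p => p.1 = x) \ M.filter (fun p => p.1 = x) := by
      ext p; simp only [Finset.mem_filter, Finset.mem_sdiff]; tauto
    rw [hsd, Finset.card_sdiff_of_subset (Finset.filter_subset_filter _ hMS), hcol x hx, hz]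
    simp

/-- Remove d matchings. -/
lemma steps (n : ℕ) : ∀ (d m : ℕ), d ≤ m → ∀ S : Finset (ℤ × ℤ), S ⊆ gridZ n →
    (∀ y ∈ Finset.Icc (1 : ℤ) (n : ℤ), (S.filter (fun p => p.2 = y)).card = m) →
    (∀ x ∈ Finset.Icc (1 : ℤ) (n : ℤ), (S.filter (fun p => p.1 = x)).card = m) →
    ∃ S' : Finset (ℤ × ℤ), S' ⊆ S ∧
      (∀ y ∈ Finset.Icc (1 : ℤ) (n : ℤ), (S'.filter (fun p => p.2 = y)).card = m - d) ∧
      (∀ x ∈ Finset.Icc (1 : ℤ) (n : ℤ), (S'.filter (fun p => p.1 = x)).card = m - d) := by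
  intro d
  induction d with
  | zero => intro m _ S _ hr hc; exact ⟨S, subset_rfl, by simpa using hr, by simpa using hc⟩
  | succ d ih =>
    intro m hdm S hsub hr hc
    have hm : m = (m - 1) + 1 := by omega
    obtain ⟨S₁, hS₁S, hr₁, hc₁⟩ := step n (m - 1) S hsub (by rw [← hm]; exact hr)
      (by rw [← hm]; exact hc)
    obtain ⟨S', hS', hr', hc'⟩ := ih (m - 1) (by omega) S₁ (hS₁S.trans hsub) hr₁ hc₁
    refine ⟨S', hS'.trans hS₁S, ?_, ?_⟩
    · intro y hy; rw [hr' y hy]; omega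
    · intro x hx; rw [hc' x hx]; omega

/-- Adjusting k: from a k-regular no-(k+1)-in-line set with reserve h on generic lines,
one obtains a k'-regular set with reserve h' = h - (k - k'). -/
theorem stmt3 (n k h : ℕ) (hh : h ≤ k) (hk : k ≤ n)
    (S : Finset (ℤ × ℤ)) (hsub : S ⊆ gridZ n)
    (hrow : ∀ y ∈ Finset.Icc (1 : ℤ) (n : ℤ), (S.filter (fun p => p.2 = y)).card = k)
    (hcol : ∀ x ∈ Finset.Icc (1 : ℤ) (n : ℤ), (S.filter (fun p => p.1 = x)).card = k)
    (hgen : ∀ a b c : ℝ, a ≠ 0 → b ≠ 0 →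
      (S.filter (fun p => a * (p.1 : ℝ) + b * (p.2 : ℝ) = c)).card ≤ k - h)
    (k' : ℕ) (hk' : k' ≤ k) (hkk' : k - k' ≤ h) :
    ∃ S' : Finset (ℤ × ℤ), S' ⊆ gridZ n ∧
      (∀ y ∈ Finset.Icc (1 : ℤ) (n : ℤ), (S'.filter (fun p => p.2 = y)).card = k') ∧
      (∀ x ∈ Finset.Icc (1 : ℤ) (n : ℤ), (S'.filter (fun p => p.1 = x)).card = k') ∧
      (∀ a b c : ℝ, a ≠ 0 → b ≠ 0 →
        (S'.filter (fun p => a * (p.1 : ℝ) + b * (p.2 : ℝ) = c)).card ≤ k' - (h - (k - k'))) := by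
  obtain ⟨S', hS'S, hr', hc'⟩ := steps n (k - k') k (by omega) S hsub hrow hcol
  have hkk : k - (k - k') = k' := by omega
  refine ⟨S', hS'S.trans hsub, by simpa [hkk] using hr', by simpa [hkk] using hc', ?_⟩
  intro a b c ha hb
  have h1 : (S'.filter (fun p => a * (p.1 : ℝ) + b * (p.2 : ℝ) = c)).card
      ≤ (S.filter (fun p => a * (p.1 : ℝ) + b * (p.2 : ℝ) = c)).card :=
    Finset.card_le_card (Finset.filter_subset_filter _ hS'S)
  have h2 := hgen a b c ha hb
  omega
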